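/- arXiv:2509.14694 — 3 statements merged into one kernel-verified Lean document; each statement's English description precedes it below -/
import Mathlib

section
/- The function defined in Algorithm 1 (the greedy interval partitioning: repeatedly pop the maximum unprocessed element a across all input sets, assign the interval [a, b) to the set containing a where b is the previously popped element or +∞ initially, and finally assign [0, a_last) to the set of the last popped element) produces, on any list of pairwise disjoint finite nonempty-union sets of naturals, a list of predicates whose denotations are pairwise disjoint and cover all of ℕ, and such that each input set lᵢ is contained in the denotation of the i-th output predicate. -/
/-- The interval `[a, b)` of naturals, where `b = none` denotes `+∞`. -/
def icoOpt (a : ℕ) : Option ℕ → Set ℕ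
  | none => Set.Ici a
  | some b => Set.Ico a b

/-- Union of a list of finite sets of naturals. -/
def listUnion (L : List (Finset ℕ)) : Finset ℕ := L.foldr (· ∪ ·) ∅

section Helpers

lemma getD_set_ne {α} (P : List α) {i j : ℕ} (hij : i ≠ j) (v d : α) :
    (P.set i v).getD j d = P.getD j d := by
  simp [List.getD_eq_getElem?_getD, List.getElem?_set_ne hij]

lemma getD_set_self {α} (P : List α) {i : ℕ} (hi : i < P.length) (v d : α) :
    (P.set i v).getD i d = v := by
  simp [List.getD_eq_getElem?_getD, List.getElem?_set_self, hi]

lemma getD_lt {α} (P : List α) {j : ℕ} (hj : j < P.length) (d : α) : P.getD j d = P[j] := by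
  simp [List.getD_eq_getElem?_getD, List.getElem?_eq_getElem hj]

lemma getD_ge {α} (P : List α) {j : ℕ} (hj : ¬ j < P.length) (d : α) : P.getD j d = d := by
  rw [List.getD_eq_getElem?_getD, List.getElem?_eq_none (by omega), Option.getD_none]

lemma getD_map_empty (L : List (Finset ℕ)) (j : ℕ) :
    (L.map fun _ => (∅ : Set ℕ)).getD j ∅ = ∅ := by
  by_cases hj : j < L.length
  · rw [getD_lt _ (by simpa using hj)]; simp
  · rw [getD_ge _ (by simpa using hj)]

lemma mem_listUnion {x : ℕ} : ∀ {L : List (Finset ℕ)},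
    x ∈ listUnion L ↔ ∃ j, ∃ _ : j < L.length, x ∈ L[j]
  | [] => by simp [listUnion]
  | s :: t => by
    simp only [listUnion, List.foldr_cons, Finset.mem_union]
    constructor
    · rintro (hx | hx)
      · exact ⟨0, by simp, hx⟩
      · obtain ⟨j, hj, hxj⟩ := (mem_listUnion (L := t)).1 hx
        exact ⟨j + 1, by simpa using hj, by simpa using hxj⟩
    · rintro ⟨j, hj, hxj⟩
      match j with
      | 0 => exact Or.inl hxj
      | j + 1 =>
        exact Or.inr ((mem_listUnion (L := t)).2 ⟨j, by simpa using hj, by simpa using hxj⟩)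

lemma getD_subset_listUnion (L : List (Finset ℕ)) (j : ℕ) : L.getD j ∅ ⊆ listUnion L := by
  by_cases hj : j < L.length
  · rw [getD_lt _ hj]
    intro x hx; exact mem_listUnion.2 ⟨j, hj, hx⟩
  · rw [getD_ge _ hj]; exact Finset.empty_subset _

lemma listUnion_card_le : ∀ L : List (Finset ℕ), (listUnion L).card ≤ (L.map Finset.card).sum
  | [] => by simp [listUnion]
  | s :: t => by
    simp only [listUnion, List.foldr_cons, List.map_cons, List.sum_cons]
    exact le_trans (Finset.card_union_le _ _)
      (Nat.add_le_add_left (listUnion_card_le t) _)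

lemma listUnion_set_erase (L : List (Finset ℕ)) {i a} (hi : i < L.length)
    (ha : a ∈ L.getD i ∅) (huniq : ∀ j, j ≠ i → a ∉ L.getD j ∅) :
    listUnion (L.set i ((L.getD i ∅).erase a)) = (listUnion L).erase a := by
  ext x
  rw [Finset.mem_erase, mem_listUnion, mem_listUnion]
  constructor
  · rintro ⟨j, hj, hxj⟩
    rw [List.length_set] at hj
    rw [List.getElem_set] at hxj
    by_cases hij : i = j
    · simp only [hij, if_pos rfl] at hxj
      rcases Finset.mem_erase.1 hxj with ⟨hxa, hx⟩
      exact ⟨hxa, j, hj, by rwa [getD_lt _ hj] at hx ⟩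
    · rw [if_neg hij] at hxj
      have hx' : a ∈ L.getD j ∅ → False := fun h => huniq j (fun h' => hij h'.symm) h
      refine ⟨fun hxa => hx' (by rw [getD_lt _ hj, ← hxa]; exact hxj), j, hj, hxj⟩
  · rintro ⟨hxa, j, hj, hxj⟩
    refine ⟨j, by simpa using hj, ?_⟩
    rw [List.getElem_set]
    by_cases hij : i = j
    · rw [if_pos hij]
      exact Finset.mem_erase.2 ⟨hxa, by rw [hij, getD_lt _ hj] at ha ⊢; exact hxj⟩
    · rw [if_neg hij]; exact hxj

lemma icoOpt_lower {a : ℕ} {b : Option ℕ} {x : ℕ} (hx : x ∈ icoOpt a b) : a ≤ x := by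
  cases b with
  | none => exact hx
  | some c => exact hx.1

lemma self_mem_icoOpt {a : ℕ} {b : Option ℕ} (hb : ∀ c, b = some c → a < c) :
    a ∈ icoOpt a b := by
  cases b with
  | none => exact le_refl a
  | some c => exact ⟨le_refl a, hb c rfl⟩

end Helpers

/-- The greedy interval-partitioning loop of Algorithm 1: repeatedly pop the maximum
unprocessed element `a` across all input sets, assign the interval `[a, b)` to the set
containing `a` (where `b` is the previously popped element, `+∞` initially), and recurse.
Returns the list of (denotations of) predicates together with the last popped
(index, element), if any. `fuel` bounds the number of iterations. -/
noncomputable def greedyAux : ℕ → List (Finset ℕ) → Option ℕ → List (Set ℕ) × Option (ℕ × ℕ)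
  | 0, L, _ => (L.map fun _ => (∅ : Set ℕ), none)
  | fuel + 1, L, b =>
    if h : (listUnion L).Nonempty then
      let a := (listUnion L).max' h
      match L.findIdx? (fun l => decide (a ∈ l)) with
      | none => (L.map fun _ => (∅ : Set ℕ), none)
      | some i =>
        let r := greedyAux fuel (L.set i ((L.getD i ∅).erase a)) (some a)
        (r.1.set i ((r.1.getD i ∅) ∪ icoOpt a b), some (r.2.getD (i, a)))
    else (L.map fun _ => (∅ : Set ℕ), none)

/-- The full specification of one run of `greedyAux`. -/
def AuxSpec (L : List (Finset ℕ)) (b : Option ℕ) (r : List (Set ℕ) × Option (ℕ × ℕ)) : Prop :=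
  r.1.length = L.length ∧
  (∀ j k, j ≠ k → r.1.getD j ∅ ∩ r.1.getD k ∅ = ∅) ∧
  (∀ i, ↑(L.getD i ∅) ⊆ r.1.getD i ∅) ∧
  (∀ h : (listUnion L).Nonempty,
    ∃ i₀, r.2 = some (i₀, (listUnion L).min' h) ∧ i₀ < L.length ∧
      (⋃ j, r.1.getD j ∅) = icoOpt ((listUnion L).min' h) b) ∧
  (¬ (listUnion L).Nonempty → r.1 = (L.map fun _ => ∅) ∧ r.2 = none)

lemma auxSpec_empty (L : List (Finset ℕ)) (b : Option ℕ) (hLe : listUnion L = ∅) :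
    AuxSpec L b (L.map fun _ => (∅ : Set ℕ), none) := by
  refine ⟨by simp, fun j k _ => by rw [getD_map_empty]; exact Set.empty_inter _,
    fun i => ?_, fun h => absurd hLe (Finset.nonempty_iff_ne_empty.1 h), fun _ => ⟨rfl, rfl⟩⟩
  rw [getD_map_empty]
  intro x hx
  exact absurd (getD_subset_listUnion L i hx) (by simp [hLe])

lemma greedyAux_spec : ∀ (fuel : ℕ) (L : List (Finset ℕ)) (b : Option ℕ),
    (∀ i j, i ≠ j → Disjoint (L.getD i ∅) (L.getD j ∅)) →
    (listUnion L).card ≤ fuel →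
    (∀ x ∈ listUnion L, ∀ c, b = some c → x < c) →
    AuxSpec L b (greedyAux fuel L b)
  | 0, L, b, hdisj, hcard, hb => by
    have hLe : listUnion L = ∅ := Finset.card_eq_zero.1 (Nat.le_zero.1 hcard)
    rw [greedyAux]
    exact auxSpec_empty L b hLe
  | fuel + 1, L, b, hdisj, hcard, hb => by
    by_cases h : (listUnion L).Nonempty
    · set a := (listUnion L).max' h with ha_def
      have haU : a ∈ listUnion L := Finset.max'_mem _ h
      obtain ⟨ja, hja, haja⟩ := mem_listUnion.1 haU
      -- findIdx? returns some index
      obtain ⟨i, hfind⟩ : ∃ i, L.findIdx? (fun l => decide (a ∈ l)) = some i := by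
        cases hf : L.findIdx? (fun l => decide (a ∈ l)) with
        | none =>
          exfalso
          have := List.findIdx?_eq_none_iff.1 hf L[ja] (List.getElem_mem hja)
          simp at this
          exact this haja
        | some i => exact ⟨i, rfl⟩
      obtain ⟨hi, hai'⟩ : ∃ hl : i < L.length, (fun l => decide (a ∈ l)) L[i] := by
        rw [List.findIdx?_eq_some_iff_findIdx_eq] at hfind
        obtain ⟨h1, h2⟩ := hfind
        subst h2
        exact ⟨h1, @List.findIdx_getElem _ (fun l => decide (a ∈ l)) L h1⟩
      have hai : a ∈ L.getD i ∅ := by rw [getD_lt _ hi]; simpa using hai'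
      have huniq : ∀ j, j ≠ i → a ∉ L.getD j ∅ := by
        intro j hj haj
        exact Finset.disjoint_left.1 (hdisj j i hj) haj hai
      set L' := L.set i ((L.getD i ∅).erase a) with hL'_def
      have hLU' : listUnion L' = (listUnion L).erase a := listUnion_set_erase L hi hai huniq
      have hlen' : L'.length = L.length := List.length_set ..
      have hsub : ∀ j, L'.getD j ∅ ⊆ L.getD j ∅ := by
        intro j
        by_cases hij : i = j
        · subst hij
          rw [getD_set_self _ hi]
          exact Finset.erase_subset _ _
        · rw [getD_set_ne _ hij]
      have hdisj' : ∀ i' j', i' ≠ j' → Disjoint (L'.getD i' ∅) (L'.getD j' ∅) :=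
        fun i' j' hij => Finset.disjoint_of_subset_left (hsub i')
          (Finset.disjoint_of_subset_right (hsub j') (hdisj i' j' hij))
      have hcard' : (listUnion L').card ≤ fuel := by
        rw [hLU', Finset.card_erase_of_mem haU]
        omega
      have hb' : ∀ x ∈ listUnion L', ∀ c, some a = some c → x < c := by
        intro x hx c hc
        rw [hLU', Finset.mem_erase] at hx
        obtain rfl : a = c := Option.some_injective _ hc
        exact lt_of_le_of_ne (Finset.le_max' _ _ hx.2) hx.1
      have IH := greedyAux_spec fuel L' (some a) hdisj' hcard' hb'
      set r := greedyAux fuel L' (some a) with hr_def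
      have hstep : greedyAux (fuel + 1) L b =
          (r.1.set i ((r.1.getD i ∅) ∪ icoOpt a b), some (r.2.getD (i, a))) := by
        rw [greedyAux]
        simp only [dif_pos h, ← ha_def, hfind]
        rfl
      rw [hstep]
      obtain ⟨IHlen, IHdisj, IHcont, IHne, IHemp⟩ := IH
      have hilen : i < r.1.length := by rw [IHlen, hlen']; exact hi
      have hPlen : (r.1.set i ((r.1.getD i ∅) ∪ icoOpt a b)).length = L.length := by
        rw [List.length_set, IHlen, hlen']
      have hrsub : ∀ k, (r.1.getD k ∅ : Set ℕ) ⊆ {x | x < a} := by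
        intro k
        by_cases he : (listUnion L').Nonempty
        · obtain ⟨i', _, _, hun'⟩ := IHne he
          intro x hx
          have : x ∈ ⋃ j, r.1.getD j ∅ := Set.mem_iUnion.2 ⟨k, hx⟩
          rw [hun'] at this
          exact this.2
        · rw [(IHemp he).1, getD_map_empty]
          exact Set.empty_subset _
      -- the assigned interval sits above a
      have hPget : ∀ k, k ≠ i →
          (r.1.set i ((r.1.getD i ∅) ∪ icoOpt a b)).getD k ∅ = r.1.getD k ∅ :=
        fun k hk => getD_set_ne _ (fun hh => hk hh.symm) _ _
      have hPi : (r.1.set i ((r.1.getD i ∅) ∪ icoOpt a b)).getD i ∅ =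
          r.1.getD i ∅ ∪ icoOpt a b := getD_set_self _ hilen _ _
      have hPdisj : ∀ j k, j ≠ k →
          (r.1.set i ((r.1.getD i ∅) ∪ icoOpt a b)).getD j ∅ ∩
          (r.1.set i ((r.1.getD i ∅) ∪ icoOpt a b)).getD k ∅ = ∅ := by
        intro j k hjk
        rw [Set.eq_empty_iff_forall_notMem]
        rintro x ⟨hxj, hxk⟩
        by_cases hji : j = i
        · rw [hji, hPi] at hxj
          rw [hPget k (fun hh => hjk (hji.trans hh.symm))] at hxk
          rcases hxj with hxj | hxj
          · exact Set.eq_empty_iff_forall_notMem.1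
              (IHdisj i k (hji ▸ hjk)) x ⟨hxj, hxk⟩
          · exact absurd (hrsub k hxk) (not_lt.2 (icoOpt_lower hxj))
        · by_cases hki : k = i
          · rw [hki, hPi] at hxk
            rw [hPget j hji] at hxj
            rcases hxk with hxk | hxk
            · exact Set.eq_empty_iff_forall_notMem.1
                (IHdisj j i (hki ▸ hjk)) x ⟨hxj, hxk⟩
            · exact absurd (hrsub j hxj) (not_lt.2 (icoOpt_lower hxk))
          · rw [hPget j hji] at hxj
            rw [hPget k hki] at hxk
            exact Set.eq_empty_iff_forall_notMem.1 (IHdisj j k hjk) x ⟨hxj, hxk⟩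
      have hPcont : ∀ j, ↑(L.getD j ∅) ⊆
          (r.1.set i ((r.1.getD i ∅) ∪ icoOpt a b)).getD j ∅ := by
        intro j x hx
        by_cases hji : j = i
        · rw [hji, hPi]
          rw [hji] at hx
          by_cases hxa : x = a
          · rw [hxa]
            exact Or.inr (self_mem_icoOpt (hb a haU))
          · refine Or.inl (IHcont i ?_)
            rw [hL'_def, getD_set_self _ hi]
            exact Finset.mem_erase.2 ⟨hxa, hx⟩
        · rw [hPget j hji]
          refine IHcont j ?_
          rw [hL'_def, getD_set_ne _ (fun hh => hji hh.symm)]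
          exact hx
      refine ⟨hPlen, hPdisj, hPcont, ?_, fun hcon => absurd h hcon⟩
      intro _
      by_cases he : (listUnion L').Nonempty
      · -- recursive case: more elements remain
        obtain ⟨i', hr2, hi'len, hun'⟩ := IHne he
        have hm'U : (listUnion L').min' he ∈ (listUnion L).erase a := by
          rw [← hLU']; exact Finset.min'_mem _ he
        set m' := (listUnion L').min' he with hm'_def
        have hm'a : m' < a := by
          rcases Finset.mem_erase.1 hm'U with ⟨hne, hmem⟩
          exact lt_of_le_of_ne (Finset.le_max' _ _ hmem) hne
        have hminL : (listUnion L).min' h = m' := by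
          apply le_antisymm
          · exact Finset.min'_le _ _ (Finset.mem_of_mem_erase hm'U)
          · apply Finset.le_min'
            intro y hy
            by_cases hya : y = a
            · subst hya; exact le_of_lt hm'a
            · exact Finset.min'_le _ _ (by rw [hLU']; exact Finset.mem_erase.2 ⟨hya, hy⟩)
        refine ⟨i', ?_, by rwa [hlen'] at hi'len, ?_⟩
        · rw [hminL, hr2]; rfl
        · rw [hminL]
          apply Set.Subset.antisymm
          · apply Set.iUnion_subset
            intro k
            by_cases hki : k = i
            · rw [hki, hPi]
              rintro x (hx | hx)
              · have : x ∈ ⋃ j, r.1.getD j ∅ := Set.mem_iUnion.2 ⟨i, hx⟩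
                rw [hun'] at this
                cases b with
                | none => exact this.1
                | some c => exact ⟨this.1, lt_trans this.2 (hb a haU c rfl)⟩
              · cases b with
                | none => exact le_trans (le_of_lt hm'a) (icoOpt_lower hx)
                | some c => exact ⟨le_trans (le_of_lt hm'a) hx.1, hx.2⟩
            · rw [hPget k hki]
              intro x hx
              have : x ∈ ⋃ j, r.1.getD j ∅ := Set.mem_iUnion.2 ⟨k, hx⟩
              rw [hun'] at this
              cases b with
              | none => exact this.1
              | some c => exact ⟨this.1, lt_trans this.2 (hb a haU c rfl)⟩
          · intro x hx
            by_cases hxa : a ≤ x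
            · have hxIco : x ∈ icoOpt a b := by
                cases b with
                | none => exact hxa
                | some c => exact ⟨hxa, hx.2⟩
              exact Set.mem_iUnion.2 ⟨i, by rw [hPi]; exact Or.inr hxIco⟩
            · push_neg at hxa
              have hxm' : m' ≤ x := icoOpt_lower hx
              have : x ∈ ⋃ j, r.1.getD j ∅ := by
                rw [hun']; exact ⟨hxm', hxa⟩
              obtain ⟨k, hk⟩ := Set.mem_iUnion.1 this
              by_cases hki : k = i
              · rw [hki] at hk
                exact Set.mem_iUnion.2 ⟨i, by rw [hPi]; exact Or.inl hk⟩
              · exact Set.mem_iUnion.2 ⟨k, by rw [hPget k hki]; exact hk⟩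
      · -- base case: L' exhausted, listUnion L = {a}
        have hLa : listUnion L = {a} := by
          have hLe' : (listUnion L).erase a = ∅ := by
            rw [← hLU']; exact Finset.not_nonempty_iff_eq_empty.1 he
          apply Finset.Subset.antisymm
          · intro y hy
            by_cases hya : y = a
            · simp [hya]
            · exact absurd (Finset.mem_erase.2 ⟨hya, hy⟩) (by simp [hLe'])
          · intro y hy
            rw [Finset.mem_singleton] at hy
            subst hy; exact haU
        have hmin : (listUnion L).min' h = a := by
          apply le_antisymm (Finset.min'_le _ _ haU)
          apply Finset.le_min'
          intro y hy
          rw [hLa, Finset.mem_singleton] at hy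
          exact le_of_eq hy.symm
        obtain ⟨hr1, hr2⟩ := IHemp he
        refine ⟨i, ?_, hi, ?_⟩
        · rw [hmin, hr2]; rfl
        · rw [hmin]
          apply Set.Subset.antisymm
          · apply Set.iUnion_subset
            intro k
            by_cases hki : k = i
            · rw [hki, hPi, hr1, getD_map_empty, Set.empty_union]
            · rw [hPget k hki, hr1, getD_map_empty]
              exact Set.empty_subset _
          · intro x hx
            refine Set.mem_iUnion.2 ⟨i, ?_⟩
            rw [hPi]
            exact Or.inr hx
    · -- listUnion L is empty
      have hLe : listUnion L = ∅ := Finset.not_nonempty_iff_eq_empty.1 h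
      rw [greedyAux, dif_neg h]
      exact auxSpec_empty L b hLe

/-- The partitioning function of Algorithm 1 for the interval algebra over ℕ: run the
greedy loop (with enough fuel to exhaust all elements) and finally assign `[0, a_last)`
to the set of the last popped element `a_last`. -/
noncomputable def greedyPartition (L : List (Finset ℕ)) : List (Set ℕ) :=
  let r := greedyAux ((L.map Finset.card).sum) L none
  match r.2 with
  | none => r.1
  | some (i, a) => r.1.set i ((r.1.getD i ∅) ∪ Set.Ico 0 a)

/-- On any list of pairwise disjoint finite sets of naturals with nonempty union,
Algorithm 1 produces a list of predicates (of the same length) whose denotations are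
pairwise disjoint and cover all of ℕ, and each input set `lᵢ` is contained in the
denotation of the `i`-th output predicate. -/
theorem stmt3 (L : List (Finset ℕ))
    (hdisj : ∀ i j : Fin L.length, i ≠ j → Disjoint (L.get i) (L.get j))
    (hne : ∃ i : Fin L.length, (L.get i).Nonempty) :
    (greedyPartition L).length = L.length ∧
    (∀ i j : Fin (greedyPartition L).length, i ≠ j →
      (greedyPartition L).get i ∩ (greedyPartition L).get j = ∅) ∧
    (⋃ i : Fin (greedyPartition L).length, (greedyPartition L).get i) = Set.univ ∧
    (∀ i : Fin L.length, ↑(L.get i) ⊆ (greedyPartition L).getD i ∅) := by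
  have hdisj' : ∀ i j : ℕ, i ≠ j → Disjoint (L.getD i ∅) (L.getD j ∅) := by
    intro i j hij
    by_cases hi : i < L.length
    · by_cases hj : j < L.length
      · rw [getD_lt _ hi, getD_lt _ hj]
        exact hdisj ⟨i, hi⟩ ⟨j, hj⟩ (by simp [Fin.ext_iff, hij])
      · rw [getD_ge _ hj]; exact Finset.disjoint_empty_right _
    · rw [getD_ge _ hi]; exact Finset.disjoint_empty_left _
  have hne' : (listUnion L).Nonempty := by
    obtain ⟨i, x, hx⟩ := hne
    exact ⟨x, mem_listUnion.2 ⟨i.1, i.isLt, hx⟩⟩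
  have spec := greedyAux_spec ((L.map Finset.card).sum) L none hdisj'
    (listUnion_card_le L) (by simp)
  set r := greedyAux ((L.map Finset.card).sum) L none with hr
  obtain ⟨slen, sdisj, scont, sne, _⟩ := spec
  obtain ⟨i₀, hr2, hi₀, hun⟩ := sne hne'
  set m := (listUnion L).min' hne' with hm
  have hgp : greedyPartition L = r.1.set i₀ ((r.1.getD i₀ ∅) ∪ Set.Ico 0 m) := by
    unfold greedyPartition
    rw [← hr]
    simp only [hr2]
  set P := r.1.set i₀ ((r.1.getD i₀ ∅) ∪ Set.Ico 0 m) with hP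
  have hi₀r : i₀ < r.1.length := by rw [slen]; exact hi₀
  have hPlen : P.length = L.length := by rw [hP, List.length_set, slen]
  have hPi : P.getD i₀ ∅ = r.1.getD i₀ ∅ ∪ Set.Ico 0 m := getD_set_self _ hi₀r _ _
  have hPget : ∀ k, k ≠ i₀ → P.getD k ∅ = r.1.getD k ∅ :=
    fun k hk => getD_set_ne _ (fun hh => hk hh.symm) _ _
  have hrsub : ∀ k, (r.1.getD k ∅ : Set ℕ) ⊆ Set.Ici m := by
    intro k x hx
    have : x ∈ ⋃ j, r.1.getD j ∅ := Set.mem_iUnion.2 ⟨k, hx⟩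
    rw [hun] at this
    exact this
  have hPdisj : ∀ j k, j ≠ k → P.getD j ∅ ∩ P.getD k ∅ = ∅ := by
    intro j k hjk
    rw [Set.eq_empty_iff_forall_notMem]
    rintro x ⟨hxj, hxk⟩
    by_cases hji : j = i₀
    · rw [hji, hPi] at hxj
      rw [hPget k (fun hh => hjk (hji.trans hh.symm))] at hxk
      rcases hxj with hxj | hxj
      · exact Set.eq_empty_iff_forall_notMem.1 (sdisj i₀ k (hji ▸ hjk)) x ⟨hxj, hxk⟩
      · exact absurd (hrsub k hxk) (not_le.2 hxj.2)
    · by_cases hki : k = i₀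
      · rw [hki, hPi] at hxk
        rw [hPget j hji] at hxj
        rcases hxk with hxk | hxk
        · exact Set.eq_empty_iff_forall_notMem.1 (sdisj j i₀ (hki ▸ hjk)) x ⟨hxj, hxk⟩
        · exact absurd (hrsub j hxj) (not_le.2 hxk.2)
      · rw [hPget j hji] at hxj
        rw [hPget k hki] at hxk
        exact Set.eq_empty_iff_forall_notMem.1 (sdisj j k hjk) x ⟨hxj, hxk⟩
  refine ⟨by rw [hgp]; exact hPlen, ?_, ?_, ?_⟩
  · intro i j hij
    have hd := hPdisj i.1 j.1 (Fin.val_ne_of_ne hij)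
    have hlen2 : (greedyPartition L).length = P.length := by rw [hgp]
    have hilt : (i : ℕ) < P.length := Nat.lt_of_lt_of_le i.isLt (le_of_eq hlen2)
    have hjlt : (j : ℕ) < P.length := Nat.lt_of_lt_of_le j.isLt (le_of_eq hlen2)
    rw [getD_lt _ hilt] at hd
    rw [getD_lt _ hjlt] at hd
    simp only [hgp, List.get_eq_getElem]
    exact hd
  · rw [Set.eq_univ_iff_forall]
    intro x
    rw [Set.mem_iUnion]
    by_cases hxm : x < m
    · refine ⟨⟨i₀, by rw [hgp, hPlen]; exact hi₀⟩, ?_⟩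
      simp only [hgp, List.get_eq_getElem]
      rw [← getD_lt _ (by rw [hPlen]; exact hi₀), hPi]
      exact Or.inr ⟨Nat.zero_le x, hxm⟩
    · push_neg at hxm
      have : x ∈ ⋃ j, r.1.getD j ∅ := by rw [hun]; exact hxm
      obtain ⟨k, hk⟩ := Set.mem_iUnion.1 this
      have hklt : k < r.1.length := by
        by_contra hc
        rw [getD_ge _ hc] at hk
        exact hk
      have hkP : x ∈ P.getD k ∅ := by
        by_cases hki : k = i₀
        · rw [hki] at hk ⊢
          rw [hPi]
          exact Or.inl hk
        · rw [hPget k hki]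
          exact hk
      refine ⟨⟨k, by rw [hgp, hP, List.length_set]; exact hklt⟩, ?_⟩
      simp only [hgp, List.get_eq_getElem]
      rw [← getD_lt _ (by rw [hP, List.length_set]; exact hklt)]
      exact hkP
  · intro i
    have hgd : (greedyPartition L).getD i.1 ∅ = P.getD i.1 ∅ := by rw [hgp]
    rw [hgd]
    have hLget : (L.get i : Set ℕ) ⊆ ↑(L.getD i.1 ∅) := by
      rw [getD_lt _ i.isLt]
      simp
    refine subset_trans hLget ?_
    by_cases hii : i.1 = i₀
    · rw [hii, hPi]
      exact subset_trans (scont i₀) Set.subset_union_left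
    · rw [hPget i.1 hii]
      exact scont i.1
end

section
/- Let T = (D, S, R, Σ_E, E, f) be a cohesive observation table and M_hyp^e = (Σ_E, Q, q0, Γ, δ_t^e, δ_o^e) the evidence Mealy automaton constructed from T. Then for every word w ∈ S ∪ R, the state reached from the initial state on input w equals row(w): δ_t^e(q0, w) = row(w). -/
attribute [local instance] Classical.propDecidable

/-- A (deterministic) Mealy automaton over input alphabet `A`, states `Q`,
output alphabet `Γ`, with initial state, transition and output functions. -/
structure Mealy (A Q Γ : Type*) where
  init : Q
  δt : Q → A → Q
  δo : Q → A → Γ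

namespace Mealy

variable {A Q Γ : Type*}

/-- Extended transition function on words. -/
def transStar (M : Mealy A Q Γ) : Q → List A → Q
  | q, [] => q
  | q, a :: w => M.transStar (M.δt q a) w

/-- Extended output function on a nonempty word given as head and tail. -/
def outStar (M : Mealy A Q Γ) : Q → A → List A → Γ
  | q, a, [] => M.δo q a
  | q, a, b :: w => M.outStar (M.δt q a) b w

/-- `M(a·w)`: output of the automaton on the nonempty word `a :: w` from the initial state. -/
def out (M : Mealy A Q Γ) (a : A) (w : List A) : Γ := M.outStar M.init a w

end Mealy

/-- An observation table `T = (D, S, R, Σ_E, E, f)` for a target Mealy-style output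
function `tgt : D⁺ → Γ`, where `f(w, e) = tgt(w·e)`.  `S ∪ R` is prefix-closed,
`Σ_E ∪ E` is suffix-closed, `ε ∈ S`, `Σ_E` is nonempty, and all components are finite. -/
structure ObsTable (D Γ : Type*) where
  S : Set (List D)
  R : Set (List D)
  E : Set (List D)
  sigE : Set D
  tgt : List D → Γ
  S_finite : S.Finite
  R_finite : R.Finite
  E_finite : E.Finite
  sigE_finite : sigE.Finite
  eps_mem : ([] : List D) ∈ S
  sigE_nonempty : sigE.Nonempty
  prefixClosed : ∀ w ∈ S ∪ R, ∀ v : List D, v <+: w → v ∈ S ∪ R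
  suffixClosed : ∀ w, (w ∈ E ∨ ∃ a ∈ sigE, w = [a]) →
    ∀ v : List D, v <:+ w → v ≠ [] → (v ∈ E ∨ ∃ a ∈ sigE, v = [a])

namespace ObsTable

variable {D Γ : Type*} (T : ObsTable D Γ)

/-- The set of column indices `Σ_E ∪ E` (characters of `Σ_E` viewed as length-1 words). -/
def col : Set (List D) := {w | w ∈ T.E ∨ ∃ a ∈ T.sigE, w = [a]}

/-- The table entry `f(w, e) = tgt(w·e)`. -/
def f (w e : List D) : Γ := T.tgt (w ++ e)

/-- `row(w₁) = row(w₂)`: the rows of `w₁` and `w₂` agree on every column. -/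
def rowEq (w₁ w₂ : List D) : Prop := ∀ e ∈ T.col, T.f w₁ e = T.f w₂ e

/-- Closedness: every row of `R` equals some row of `S`. -/
def Closed : Prop := ∀ r ∈ T.R, ∃ s ∈ T.S, T.rowEq s r

/-- Consistency. -/
def Consistent : Prop := ∀ w₁ ∈ T.S ∪ T.R, ∀ w₂ ∈ T.S ∪ T.R, T.rowEq w₁ w₂ →
  ∀ a : D, w₁ ++ [a] ∈ T.S ∪ T.R → w₂ ++ [a] ∈ T.S ∪ T.R →
    T.rowEq (w₁ ++ [a]) (w₂ ++ [a])

/-- Evidence-closedness: `s·e ∈ S ∪ R` for all `s ∈ S`, `e ∈ Σ_E`. -/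
def EvidenceClosed : Prop := ∀ s ∈ T.S, ∀ a ∈ T.sigE, s ++ [a] ∈ T.S ∪ T.R

/-- Output-closedness: `w·a ∈ S ∪ R` implies `a ∈ Σ_E`. -/
def OutputClosed : Prop := ∀ w ∈ T.S ∪ T.R, ∀ a : D, w ++ [a] ∈ T.S ∪ T.R → a ∈ T.sigE

/-- Cohesiveness: closed, consistent, evidence-closed and output-closed. -/
def Cohesive : Prop := T.Closed ∧ T.Consistent ∧ T.EvidenceClosed ∧ T.OutputClosed

/-- Reducedness: distinct elements of `S` have distinct rows. -/
def Reduced : Prop := ∀ s₁ ∈ T.S, ∀ s₂ ∈ T.S, T.rowEq s₁ s₂ → s₁ = s₂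

/-- `row(w)` as a function from columns to outputs. -/
def rowFun (w : List D) : ↥T.col → Γ := fun e => T.f w e.1

/-- The state space of the evidence Mealy automaton: `{row(s) : s ∈ S}`. -/
def EvQ : Type _ := {g : ↥T.col → Γ // g ∈ rowFun T '' T.S}

/-- A representative `s ∈ S` of a state (a row) of the evidence automaton. -/
noncomputable def rep (q : T.EvQ) : List D :=
  Classical.choose (show ∃ x, x ∈ T.S ∧ T.rowFun x = q.1 from q.2)

/-- The evidence Mealy automaton constructed from `T`: states are the rows of `S`,
the initial state is `row(ε)`, `δt(row(s), a) = row(s·a)` and `δo(row(s), a) = f(s, a)`.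
(For a cohesive table these equations hold for the function below; outside that
situation a junk value is returned.) -/
noncomputable def evidence : Mealy D T.EvQ Γ where
  init := ⟨T.rowFun [], Set.mem_image_of_mem _ T.eps_mem⟩
  δt := fun q a =>
    if h : T.rowFun (T.rep q ++ [a]) ∈ rowFun T '' T.S then ⟨_, h⟩ else q
  δo := fun q a => T.tgt (T.rep q ++ [a])

/-- A Mealy automaton `M` is evidence compatible with `T` if `M(s·e) = f(s, e)` for
all `s ∈ S ∪ R` and `e ∈ Σ_E ∪ E`. -/
def EvidenceCompatible {Q : Type*} (M : Mealy D Q Γ) : Prop :=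
  ∀ s ∈ T.S ∪ T.R, ∀ e ∈ T.col, ∀ (a : D) (w : List D),
    s ++ e = a :: w → M.out a w = T.f s e

end ObsTable

/-- For a cohesive observation table `T` and its evidence Mealy automaton, for every
word `w ∈ S ∪ R`, the state reached from the initial state on `w` equals `row(w)`:
`δ_t^e(q0, w) = row(w)`. -/
theorem stmt5 {D Γ : Type*} (T : ObsTable D Γ) (h : T.Cohesive) :
    ∀ w ∈ T.S ∪ T.R,
      (T.evidence.transStar T.evidence.init w).1 = T.rowFun w := by
  obtain ⟨hcl, hcons, hev, hout⟩ := h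
  have transStar_append : ∀ {Q : Type _} (M : Mealy D Q Γ) (q : Q) (w : List D) (a : D),
      M.transStar q (w ++ [a]) = M.δt (M.transStar q w) a := by
    intro Q M q w a
    induction w generalizing q with
    | nil => rfl
    | cons b v ih => simp [Mealy.transStar, ih]
  have rowFun_eq_of_rowEq : ∀ {w₁ w₂ : List D}, T.rowEq w₁ w₂ → T.rowFun w₁ = T.rowFun w₂ := by
    intro w₁ w₂ hre
    funext e
    exact hre e.1 e.2
  have mem_image_of_mem : ∀ w ∈ T.S ∪ T.R, T.rowFun w ∈ T.rowFun '' T.S := by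
    intro w hw
    rcases hw with hw | hw
    · exact Set.mem_image_of_mem _ hw
    · obtain ⟨s, hs, hse⟩ := hcl w hw
      exact ⟨s, hs, rowFun_eq_of_rowEq hse⟩
  intro w hw
  induction w using List.reverseRecOn with
  | nil => rfl
  | append_singleton v a ih =>
    have hv : v ∈ T.S ∪ T.R := T.prefixClosed _ hw v ⟨[a], rfl⟩
    have ihv := ih hv
    rw [transStar_append]
    set q := T.evidence.transStar T.evidence.init v with hq
    -- rep q is in S and has the same row as v
    have hq2 : q.1 ∈ T.rowFun '' T.S := q.2
    have hrep : T.rep q ∈ T.S ∧ T.rowFun (T.rep q) = q.1 :=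
      Classical.choose_spec (show ∃ x, x ∈ T.S ∧ T.rowFun x = q.1 from q.2)
    have hrepmem : T.rep q ∈ T.S ∪ T.R := Or.inl hrep.1
    have hrowEq : T.rowEq (T.rep q) v := by
      intro e he
      have : T.rowFun (T.rep q) = T.rowFun v := by rw [hrep.2, ihv]
      exact congrFun this ⟨e, he⟩
    have ha : a ∈ T.sigE := hout v hv a hw
    have hrepa : T.rep q ++ [a] ∈ T.S ∪ T.R := hev _ hrep.1 a ha
    have hconsEq : T.rowEq (T.rep q ++ [a]) (v ++ [a]) :=
      hcons _ hrepmem _ hv hrowEq a hrepa hw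
    have hmem : T.rowFun (T.rep q ++ [a]) ∈ T.rowFun '' T.S :=
      mem_image_of_mem _ hrepa
    show (T.evidence.δt q a).1 = _
    simp only [ObsTable.evidence, dif_pos hmem]
    exact (congrArg Subtype.val (dif_pos hmem)).trans (rowFun_eq_of_rowEq hconsEq)
end

section
/- Let T be a cohesive observation table for target M_tgt, M_hyp^e the evidence Mealy automaton constructed from T, and M_hyp the corresponding symbolic hypothesis (so that M_hyp agrees with M_hyp^e on Σ_E⁺). Suppose the oracle returns a counterexample cex ∈ Σ_E⁺ with M_tgt(cex) ≠ M_hyp(cex), all prefixes of cex are added to R, and T' is the resulting cohesive observation table with evidence automaton M'. Then M' has strictly more states than M_hyp^e. -/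
attribute [local instance] Classical.propDecidable

section Helpers

namespace Mealy

variable {A Q Γ : Type*}

theorem transStar_append (M : Mealy A Q Γ) (q : Q) (u v : List A) :
    M.transStar q (u ++ v) = M.transStar (M.transStar q u) v := by
  induction u generalizing q with
  | nil => rfl
  | cons a u ih => simp [transStar, ih]

theorem outStar_concat (M : Mealy A Q Γ) (q : Q) (a b : A) (u : List A) :
    M.outStar q a (u ++ [b]) = M.δo (M.transStar q (a :: u)) b := by
  induction u generalizing q a with
  | nil => rfl
  | cons c u ih => simpa [outStar, transStar] using ih (M.δt q a) c

end Mealy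

namespace ObsTable

variable {D Γ : Type*} (T : ObsTable D Γ)

theorem rep_mem (q : T.EvQ) : T.rep q ∈ T.S :=
  (Classical.choose_spec (show ∃ x, x ∈ T.S ∧ T.rowFun x = q.1 from q.2)).1

theorem rowFun_rep (q : T.EvQ) : T.rowFun (T.rep q) = q.1 :=
  (Classical.choose_spec (show ∃ x, x ∈ T.S ∧ T.rowFun x = q.1 from q.2)).2

theorem rowFun_eq_iff {w₁ w₂ : List D} :
    T.rowFun w₁ = T.rowFun w₂ ↔ T.rowEq w₁ w₂ := by
  constructor
  · intro h e he; exact congrFun h ⟨e, he⟩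
  · intro h; funext e; exact h e.1 e.2

theorem evidence_δt_val (hcoh : T.Cohesive) (q : T.EvQ) (b : D)
    (hmem : T.rep q ++ [b] ∈ T.S ∪ T.R) :
    (T.evidence.δt q b).1 = T.rowFun (T.rep q ++ [b]) := by
  have himg : T.rowFun (T.rep q ++ [b]) ∈ rowFun T '' T.S := by
    rcases hmem with h | h
    · exact ⟨_, h, rfl⟩
    · obtain ⟨s, hs, hrow⟩ := hcoh.1 _ h
      exact ⟨s, hs, T.rowFun_eq_iff.mpr hrow⟩
  show (dite _ _ _ : T.EvQ).1 = _
  exact congrArg Subtype.val (dif_pos himg)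

theorem transStar_val (hcoh : T.Cohesive) (u : List D)
    (hu : ∀ v, v <+: u → v ∈ T.S ∪ T.R) :
    (T.evidence.transStar T.evidence.init u).1 = T.rowFun u := by
  induction u using List.reverseRecOn with
  | nil => rfl
  | append_singleton u b ih =>
    have hu' : ∀ v, v <+: u → v ∈ T.S ∪ T.R :=
      fun v hv => hu v (hv.trans ⟨[b], rfl⟩)
    have huu : u ∈ T.S ∪ T.R := hu' u (List.prefix_refl u)
    have hub : u ++ [b] ∈ T.S ∪ T.R := hu _ (List.prefix_refl _)
    have hb : b ∈ T.sigE := hcoh.2.2.2 u huu b hub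
    set q := T.evidence.transStar T.evidence.init u with hq
    have hrepEq : T.rowEq (T.rep q) u :=
      T.rowFun_eq_iff.mp (by rw [T.rowFun_rep, ih hu'])
    have hrb : T.rep q ++ [b] ∈ T.S ∪ T.R :=
      hcoh.2.2.1 _ (T.rep_mem q) b hb
    rw [Mealy.transStar_append]
    show (T.evidence.δt q b).1 = _
    rw [T.evidence_δt_val hcoh q b hrb]
    exact T.rowFun_eq_iff.mpr
      (hcoh.2.1 (T.rep q) (Or.inl (T.rep_mem q)) u huu hrepEq b hrb hub)

theorem evidence_out (hcoh : T.Cohesive) (a : D) (w : List D)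
    (hpre : ∀ v, v <+: (a :: w) → v ∈ T.S ∪ T.R)
    (hsig : ∀ b ∈ a :: w, b ∈ T.sigE) :
    T.evidence.out a w = T.tgt (a :: w) := by
  rcases List.eq_nil_or_concat w with rfl | ⟨u, b, rfl⟩
  all_goals try simp only [List.concat_eq_append] at *
  · have hacol : [a] ∈ T.col := Or.inr ⟨a, hsig a (by simp), rfl⟩
    have h0 : T.rowEq (T.rep T.evidence.init) [] :=
      T.rowFun_eq_iff.mp (T.rowFun_rep T.evidence.init)
    show T.tgt (T.rep T.evidence.init ++ [a]) = T.tgt [a]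
    exact h0 [a] hacol
  · have hb : b ∈ T.sigE := hsig b (by simp)
    have hbcol : [b] ∈ T.col := Or.inr ⟨b, hb, rfl⟩
    have hpre' : ∀ v, v <+: (a :: u) → v ∈ T.S ∪ T.R :=
      fun v hv => hpre v (hv.trans ⟨[b], by simp⟩)
    set st := T.evidence.transStar T.evidence.init (a :: u) with hst
    have hstv : st.1 = T.rowFun (a :: u) := T.transStar_val hcoh _ hpre'
    have hre : T.rowEq (T.rep st) (a :: u) :=
      T.rowFun_eq_iff.mp (by rw [T.rowFun_rep, hstv])
    have : T.evidence.out a (u ++ [b]) = T.evidence.δo st b :=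
      Mealy.outStar_concat _ _ a b u
    rw [this]
    show T.tgt (T.rep st ++ [b]) = T.tgt (a :: (u ++ [b]))
    have := hre [b] hbcol
    simpa [ObsTable.f] using this

end ObsTable

end Helpers

/-- Progress on counterexamples: let `T` be a cohesive observation table for target
output function `tgt`, `M_hyp` a hypothesis automaton agreeing with the evidence
automaton of `T` on all nonempty words over `Σ_E`, and `cex = a :: w ∈ Σ_E⁺` a
counterexample with `M_tgt(cex) ≠ M_hyp(cex)`.  If `T'` is a cohesive observation table
(for the same target) extending `T` and containing all prefixes of `cex` in `S' ∪ R'`,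
then the evidence automaton of `T'` has strictly more states than that of `T`. -/
theorem stmt16 {D Γ : Type*} (T : ObsTable D Γ) (hcoh : T.Cohesive)
    {QH : Type*} (Mhyp : Mealy D QH Γ)
    (hagree : ∀ (a : D) (w : List D), a ∈ T.sigE → (∀ b ∈ w, b ∈ T.sigE) →
      Mhyp.out a w = T.evidence.out a w)
    (a : D) (w : List D) (ha : a ∈ T.sigE) (hw : ∀ b ∈ w, b ∈ T.sigE)
    (hcex : T.tgt (a :: w) ≠ Mhyp.out a w)
    (T' : ObsTable D Γ) (hcoh' : T'.Cohesive) (htgt : T'.tgt = T.tgt)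
    (hSR : T.S ∪ T.R ⊆ T'.S ∪ T'.R) (hsig : T.sigE ⊆ T'.sigE) (hE : T.E ⊆ T'.E)
    (hpref : ∀ v : List D, v <+: (a :: w) → v ∈ T'.S ∪ T'.R) :
    Nat.card T.EvQ < Nat.card T'.EvQ := by
  classical
  haveI hF : Finite T.EvQ := (T.S_finite.image T.rowFun).to_subtype
  haveI hF' : Finite T'.EvQ := (T'.S_finite.image T'.rowFun).to_subtype
  -- columns of T are columns of T'
  have hcol : T.col ⊆ T'.col := by
    rintro e (he | ⟨c, hc, rfl⟩)
    · exact Or.inl (hE he)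
    · exact Or.inr ⟨c, hsig hc, rfl⟩
  have hf' : ∀ s e, T'.f s e = T.f s e := by
    intro s e; show T'.tgt _ = T.tgt _; rw [htgt]
  -- the two evidence automata disagree on the counterexample
  have hne : T.evidence.out a w ≠ T'.evidence.out a w := by
    have h1 : T'.evidence.out a w = T.tgt (a :: w) := by
      have := T'.evidence_out hcoh' a w hpref (by
        rintro b hb
        rcases List.mem_cons.mp hb with rfl | hb
        · exact hsig ha
        · exact hsig (hw b hb))
      rw [this, htgt]
    have h2 : Mhyp.out a w = T.evidence.out a w := hagree a w ha hw
    rw [h1]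
    intro h; exact hcex (by rw [← h, ← h2])
  by_contra hlt
  push_neg at hlt
  -- the embedding of states of T's evidence automaton into T'.EvQ
  set ψ : T.EvQ → T'.EvQ :=
    fun q => T'.evidence.transStar T'.evidence.init (T.rep q) with hψ
  have hrepPre : ∀ q : T.EvQ, ∀ v, v <+: T.rep q → v ∈ T'.S ∪ T'.R := by
    intro q v hv
    exact hSR (T.prefixClosed _ (Or.inl (T.rep_mem q)) v hv)
  have hψval : ∀ q : T.EvQ, (ψ q).1 = T'.rowFun (T.rep q) :=
    fun q => T'.transStar_val hcoh' _ (hrepPre q)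
  -- injectivity
  have hinj : Function.Injective ψ := by
    intro q₁ q₂ h
    have hv : T'.rowFun (T.rep q₁) = T'.rowFun (T.rep q₂) := by
      rw [← hψval q₁, ← hψval q₂, h]
    apply Subtype.ext
    rw [← T.rowFun_rep q₁, ← T.rowFun_rep q₂]
    funext e
    have := (T'.rowFun_eq_iff.mp hv) e.1 (hcol e.2)
    rw [hf', hf'] at this
    exact this
  have hcard : Nat.card T.EvQ ≤ Nat.card T'.EvQ := Nat.card_le_card_of_injective ψ hinj
  have hbij : Function.Bijective ψ :=
    (Nat.bijective_iff_injective_and_card ψ).mpr ⟨hinj, le_antisymm hcard hlt⟩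
  -- two equal rows in T' restrict to equal rows in T
  have hrestr : ∀ {s₁ s₂ : List D}, T'.rowFun s₁ = T'.rowFun s₂ →
      T.rowFun s₁ = T.rowFun s₂ := by
    intro s₁ s₂ h
    funext e
    have := (T'.rowFun_eq_iff.mp h) e.1 (hcol e.2)
    rw [hf', hf'] at this
    exact this
  -- simulation: the run of T'.evidence tracks the run of T.evidence via ψ
  have sim : ∀ u : List D, (∀ b ∈ u, b ∈ T.sigE) →
      T'.evidence.transStar T'.evidence.init u =
        ψ (T.evidence.transStar T.evidence.init u) := by
    intro u
    induction u using List.reverseRecOn with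
    | nil =>
      intro _
      obtain ⟨q₀, hq₀⟩ := hbij.2 T'.evidence.init
      have hq₀v : T'.rowFun (T.rep q₀) = T'.rowFun ([] : List D) := by
        have := hψval q₀
        rw [hq₀] at this
        exact this.symm
      have : q₀ = T.evidence.init := by
        apply Subtype.ext
        rw [← T.rowFun_rep q₀]
        exact hrestr hq₀v
      show T'.evidence.init = ψ (T.evidence.init)
      rw [← this, hq₀]
    | append_singleton u b ih =>
      intro hub
      have hu : ∀ c ∈ u, c ∈ T.sigE := fun c hc => hub c (by simp [hc])
      have hb : b ∈ T.sigE := hub b (by simp)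
      have hb' : b ∈ T'.sigE := hsig hb
      rw [Mealy.transStar_append, Mealy.transStar_append, ih hu]
      set q := T.evidence.transStar T.evidence.init u with hq
      set q' := ψ q with hq'def
      show T'.evidence.δt q' b = ψ (T.evidence.δt q b)
      -- memberships
      have hrq : T.rep q ∈ T.S := T.rep_mem q
      have hrqb : T.rep q ++ [b] ∈ T.S ∪ T.R := hcoh.2.2.1 _ hrq b hb
      have hrq' : T'.rep q' ∈ T'.S := T'.rep_mem q'
      have hrq'b : T'.rep q' ++ [b] ∈ T'.S ∪ T'.R := hcoh'.2.2.1 _ hrq' b hb'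
      -- rows of rep' q' and rep q agree in T'
      have hrr : T'.rowFun (T'.rep q') = T'.rowFun (T.rep q) := by
        rw [T'.rowFun_rep q', hq'def, hψval q]
      -- consistency in T'
      have hcons : T'.rowEq (T'.rep q' ++ [b]) (T.rep q ++ [b]) :=
        hcoh'.2.1 (T'.rep q') (Or.inl hrq') (T.rep q) (hSR (Or.inl hrq))
          (T'.rowFun_eq_iff.mp hrr) b hrq'b (hSR hrqb)
      -- identify the successor states
      set p := T.evidence.δt q b with hp
      have hpv : p.1 = T.rowFun (T.rep q ++ [b]) := T.evidence_δt_val hcoh q b hrqb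
      obtain ⟨p₀, hp₀⟩ := hbij.2 (T'.evidence.δt q' b)
      have hp₀v : T'.rowFun (T.rep p₀) = T'.rowFun (T'.rep q' ++ [b]) := by
        have := hψval p₀
        rw [hp₀, T'.evidence_δt_val hcoh' q' b hrq'b] at this
        exact this.symm
      have hps : p₀ = p := by
        apply Subtype.ext
        rw [← T.rowFun_rep p₀, hpv]
        exact hrestr (hp₀v.trans (T'.rowFun_eq_iff.mpr hcons))
      rw [← hp₀, hps]
  -- final contradiction: the two evidence automata agree on the counterexample
  apply hne
  rcases List.eq_nil_or_concat w with rfl | ⟨u, b, rfl⟩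
  all_goals try simp only [List.concat_eq_append] at hw hpref ⊢
  · -- w = []
    have h0 : T'.evidence.transStar T'.evidence.init [] = ψ (T.evidence.init) :=
      sim [] (by simp)
    have h0' : T'.evidence.init = ψ (T.evidence.init) := h0
    show T.evidence.δo T.evidence.init a = T'.evidence.δo T'.evidence.init a
    have hrr : T'.rowFun (T'.rep T'.evidence.init) = T'.rowFun (T.rep T.evidence.init) := by
      rw [T'.rowFun_rep, h0', hψval]
    have hacol : [a] ∈ T'.col := Or.inr ⟨a, hsig ha, rfl⟩
    have := (T'.rowFun_eq_iff.mp hrr) [a] hacol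
    rw [hf', hf'] at this
    show T.tgt (T.rep T.evidence.init ++ [a]) = T'.tgt (T'.rep T'.evidence.init ++ [a])
    rw [htgt]
    exact this.symm
  · -- w = u ++ [b]
    have hau : ∀ c ∈ a :: u, c ∈ T.sigE := by
      rintro c hc
      rcases List.mem_cons.mp hc with rfl | hc
      · exact ha
      · exact hw c (by simp [hc])
    have hb : b ∈ T.sigE := hw b (by simp)
    set st := T.evidence.transStar T.evidence.init (a :: u) with hstd
    have hsim : T'.evidence.transStar T'.evidence.init (a :: u) = ψ st := sim _ hau
    have e1 : T.evidence.out a (u ++ [b]) = T.evidence.δo st b :=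
      Mealy.outStar_concat _ _ a b u
    have e2 : T'.evidence.out a (u ++ [b]) = T'.evidence.δo (ψ st) b := by
      rw [← hsim]; exact Mealy.outStar_concat _ _ a b u
    rw [e1, e2]
    have hrr : T'.rowFun (T'.rep (ψ st)) = T'.rowFun (T.rep st) := by
      rw [T'.rowFun_rep, hψval]
    have hbcol : [b] ∈ T'.col := Or.inr ⟨b, hsig hb, rfl⟩
    have heq := (T'.rowFun_eq_iff.mp hrr) [b] hbcol
    rw [hf', hf'] at heq
    show T.tgt (T.rep st ++ [b]) = T'.tgt (T'.rep (ψ st) ++ [b])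
    rw [htgt]
    exact heq.symm
end
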